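/- (Multilinear Inclusion Principle.) Let 𝕂 be ℝ or ℂ, Z a 𝕂-vector space, and G, V, W nonempty sets. Let R : Z × G × W → [0,∞) and S : Z × G × V → [0,∞) be multiplicative in the variable Z, i.e. R(λz, g, w) = |λ| R(z, g, w) and S(λz, g, v) = |λ| S(z, g, v) for all λ ∈ 𝕂, z ∈ Z, g ∈ G, w ∈ W, v ∈ V. Let p₁, p₂, q₁, q₂ satisfy condition (★), and assume that for every m ∈ ℕ, z₁, …, z_m ∈ Z and g₁, …, g_m ∈ G the quantities sup_{w∈W} Σ_{j=1}^m R(z_j, g_j, w)^{p} (for p = p₁ and p = p₂) and sup_{v∈V} Σ_{j=1}^m S(z_j, g_j, v)^{q} (for q = q₁ and q = q₂) are finite. If there is C > 0 such that (sup_{v∈V} Σ_{j=1}^m S(z_j, g_j, v)^{q₁})^{1/q₁} ≤ C · (sup_{w∈W} Σ_{j=1}^m R(z_j, g_j, w)^{p₁})^{1/p₁} for every m ∈ ℕ and all z_j ∈ Z, g_j ∈ G, then (sup_{v∈V} Σ_{j=1}^m S(z_j, g_j, v)^{q₂})^{1/q₂} ≤ C · (sup_{w∈W} Σ_{j=1}^m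 R(z_j, g_j, w)^{p₂})^{1/p₂} for every m ∈ ℕ and all z_j ∈ Z, g_j ∈ G. -/

import Mathlib

open scoped BigOperators

/-- **Multilinear Inclusion Principle.** Let `𝕜` be `ℝ` or `ℂ`, `Z` a
`𝕜`-vector space, `G, V, W` nonempty sets, and `R`, `S` nonnegative maps which are
multiplicative in the variable `Z`.  If `p₁, p₂, q₁, q₂` satisfy condition (★) and
`(sup_v ∑ S(zⱼ,gⱼ,v)^{q₁})^{1/q₁} ≤ C (sup_w ∑ R(zⱼ,gⱼ,w)^{p₁})^{1/p₁}` for all finite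
families, then `(sup_v ∑ S(zⱼ,gⱼ,v)^{q₂})^{1/q₂} ≤ C (sup_w ∑ R(zⱼ,gⱼ,w)^{p₂})^{1/p₂}`
for all finite families. -/
theorem stmt3 {𝕜 : Type*} [RCLike 𝕜] {Z : Type*} [AddCommGroup Z] [Module 𝕜 Z]
    [Nonempty Z] {G V W : Type*} [Nonempty G] [Nonempty V] [Nonempty W]
    (R : Z → G → W → ℝ) (S : Z → G → V → ℝ)
    (hRnn : ∀ z g w, 0 ≤ R z g w) (hSnn : ∀ z g v, 0 ≤ S z g v)
    (hRmul : ∀ (lam : 𝕜) (z : Z) (g : G) (w : W), R (lam • z) g w = ‖lam‖ * R z g w)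
    (hSmul : ∀ (lam : 𝕜) (z : Z) (g : G) (v : V), S (lam • z) g v = ‖lam‖ * S z g v)
    (p₁ p₂ q₁ q₂ : ℝ)
    (hp₁ : 1 ≤ p₁) (hp₁₂ : p₁ ≤ p₂) (hq₁ : 1 ≤ q₁) (hq₁₂ : q₁ ≤ q₂)
    (hpq₁ : p₁ ≤ q₁) (hpq₂ : p₂ ≤ q₂)
    (hstar : 1 / p₁ - 1 / q₁ ≤ 1 / p₂ - 1 / q₂)
    (hRbdd : ∀ (p : ℝ), p = p₁ ∨ p = p₂ → ∀ (m : ℕ) (z : Fin m → Z) (g : Fin m → G),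
      BddAbove (Set.range fun w : W => ∑ j, R (z j) (g j) w ^ p))
    (hSbdd : ∀ (q : ℝ), q = q₁ ∨ q = q₂ → ∀ (m : ℕ) (z : Fin m → Z) (g : Fin m → G),
      BddAbove (Set.range fun v : V => ∑ j, S (z j) (g j) v ^ q))
    (C : ℝ) (hC : 0 < C)
    (h : ∀ (m : ℕ) (z : Fin m → Z) (g : Fin m → G),
      (⨆ v : V, ∑ j, S (z j) (g j) v ^ q₁) ^ (1 / q₁) ≤
        C * (⨆ w : W, ∑ j, R (z j) (g j) w ^ p₁) ^ (1 / p₁)) :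
    ∀ (m : ℕ) (z : Fin m → Z) (g : Fin m → G),
      (⨆ v : V, ∑ j, S (z j) (g j) v ^ q₂) ^ (1 / q₂) ≤
        C * (⨆ w : W, ∑ j, R (z j) (g j) w ^ p₂) ^ (1 / p₂) := by
  have hp₁0 : (0:ℝ) < p₁ := lt_of_lt_of_le one_pos hp₁
  have hq₁0 : (0:ℝ) < q₁ := lt_of_lt_of_le one_pos hq₁
  have hp₂0 : (0:ℝ) < p₂ := lt_of_lt_of_le hp₁0 hp₁₂
  have hq₂0 : (0:ℝ) < q₂ := lt_of_lt_of_le hq₁0 hq₁₂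
  intro m z g
  -- trivial case q₁ = q₂
  rcases eq_or_lt_of_le hq₁₂ with hqeq | hqlt
  · have h1 : 1 / p₁ ≤ 1 / p₂ := by rw [hqeq] at hstar; linarith
    have hpeq : p₁ = p₂ := by
      rw [div_le_div_iff₀ hp₁0 hp₂0] at h1
      linarith
    rw [← hqeq, ← hpeq]
    exact h m z g
  -- main case q₁ < q₂
  set ρ : ℝ := 1 / q₁ - 1 / q₂ with hρdef
  have hρ : 0 < ρ := by
    have := one_div_lt_one_div_of_lt hq₁0 hqlt
    simp only [hρdef]; linarith
  set B : ℝ := ⨆ w : W, ∑ j, R (z j) (g j) w ^ p₂ with hBdef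
  have hBmem : ∀ w : W, (∑ j, R (z j) (g j) w ^ p₂) ≤ B :=
    fun w => le_ciSup (hRbdd p₂ (Or.inr rfl) m z g) w
  have hB0 : 0 ≤ B := by
    refine le_trans ?_ (hBmem (Classical.arbitrary W))
    exact Finset.sum_nonneg fun j _ => Real.rpow_nonneg (hRnn _ _ _) _
  have hRHS0 : 0 ≤ C * B ^ (1 / p₂) := by positivity
  have key : ∀ v : V, (∑ j, S (z j) (g j) v ^ q₂) ≤ (C * B ^ (1 / p₂)) ^ q₂ := by
    intro v
    set s : Fin m → ℝ := fun j => S (z j) (g j) v with hsdef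
    have hs0 : ∀ j, 0 ≤ s j := fun j => hSnn _ _ _
    set σ : ℝ := ∑ j, s j ^ q₂ with hσdef
    have hσ0 : 0 ≤ σ := Finset.sum_nonneg fun j _ => Real.rpow_nonneg (hs0 j) _
    rcases eq_or_lt_of_le hσ0 with hσz | hσpos
    · rw [← hσz]; exact Real.rpow_nonneg hRHS0 _
    suffices hfin : σ ^ (1 / q₂) ≤ C * B ^ (1 / p₂) by
      have h1 : (σ ^ (1 / q₂)) ^ q₂ ≤ (C * B ^ (1 / p₂)) ^ q₂ :=
        Real.rpow_le_rpow (Real.rpow_nonneg hσ0 _) hfin hq₂0.le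
      rwa [← Real.rpow_mul hσ0, one_div_mul_cancel hq₂0.ne', Real.rpow_one] at h1
    -- the scaling weights
    set t : Fin m → ℝ := fun j => (s j ^ q₂ / σ) ^ ρ with htdef
    have hdiv0 : ∀ j, 0 ≤ s j ^ q₂ / σ :=
      fun j => div_nonneg (Real.rpow_nonneg (hs0 j) _) hσ0
    have ht0 : ∀ j, 0 ≤ t j := fun j => Real.rpow_nonneg (hdiv0 j) _
    have htle : ∀ j, s j ^ q₂ / σ ≤ 1 := by
      intro j
      rw [div_le_one hσpos]
      exact Finset.single_le_sum (fun i _ => Real.rpow_nonneg (hs0 i) _) (Finset.mem_univ j)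
    have ht1 : ∀ j, t j ≤ 1 := fun j =>
      Real.rpow_le_one (hdiv0 j) (htle j) hρ.le
    have htinv : ∀ j, t j ^ (1 / ρ) = s j ^ q₂ / σ := by
      intro j
      simp only [htdef]
      rw [← Real.rpow_mul (hdiv0 j), mul_one_div_cancel hρ.ne', Real.rpow_one]
    have hsum1 : ∑ j, t j ^ (1 / ρ) = 1 := by
      simp only [htinv]
      rw [← Finset.sum_div, ← hσdef, div_self hσpos.ne']
    -- the key pointwise identity
    have hkey : ∀ j, (t j * s j) ^ q₁ = s j ^ q₂ * σ ^ (-(q₁ * ρ)) := by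
      intro j
      rcases eq_or_lt_of_le (hs0 j) with hsz | hsp
      · simp only [htdef, ← hsz, Real.zero_rpow hq₂0.ne', zero_div,
          Real.zero_rpow hρ.ne', zero_mul, Real.zero_rpow hq₁0.ne', zero_mul]
      · have htpos : t j = s j ^ (q₂ * ρ) * σ ^ (-ρ) := by
          simp only [htdef]
          rw [Real.div_rpow (Real.rpow_nonneg (hs0 j) _) hσ0,
            ← Real.rpow_mul (hs0 j), div_eq_mul_inv, ← Real.rpow_neg hσ0]
        rw [Real.mul_rpow (ht0 j) (hs0 j), htpos,
          Real.mul_rpow (Real.rpow_nonneg (hs0 j) _) (Real.rpow_nonneg hσ0 _),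
          ← Real.rpow_mul (hs0 j), ← Real.rpow_mul hσ0]
        rw [mul_assoc, mul_comm (σ ^ (-ρ * q₁)) (s j ^ q₁), ← mul_assoc,
          ← Real.rpow_add hsp]
        congr 2
        · rw [hρdef]; field_simp; ring
        · ring
    have hsum2 : ∑ j, (t j * s j) ^ q₁ = σ ^ (q₁ / q₂) := by
      simp only [hkey]
      rw [← Finset.sum_mul, ← hσdef]
      nth_rewrite 1 [← Real.rpow_one σ]
      rw [← Real.rpow_add hσpos]
      congr 1
      rw [hρdef]; field_simp; ring
    -- scaled vectors
    set z' : Fin m → Z := fun j => ((t j : ℝ) : 𝕜) • z j with hz'def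
    have hS' : ∀ (j : Fin m) (v' : V), S (z' j) (g j) v' = t j * S (z j) (g j) v' := by
      intro j v'
      rw [hz'def]
      rw [hSmul, RCLike.norm_ofReal, abs_of_nonneg (ht0 j)]
    have hR' : ∀ (j : Fin m) (w : W), R (z' j) (g j) w = t j * R (z j) (g j) w := by
      intro j w
      rw [hz'def]
      rw [hRmul, RCLike.norm_ofReal, abs_of_nonneg (ht0 j)]
    have happ := h m z' g
    simp only [hS', hR'] at happ
    have hbddS : BddAbove (Set.range fun v' : V => ∑ j, (t j * S (z j) (g j) v') ^ q₁) := by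
      have := hSbdd q₁ (Or.inl rfl) m z' g
      simp only [hS'] at this
      exact this
    -- LHS chain
    have hstep1 : σ ^ (1 / q₂) = (∑ j, (t j * s j) ^ q₁) ^ (1 / q₁) := by
      rw [hsum2, ← Real.rpow_mul hσ0]
      congr 1
      field_simp
    have hstep2 : (∑ j, (t j * s j) ^ q₁) ≤ ⨆ v' : V, ∑ j, (t j * S (z j) (g j) v') ^ q₁ :=
      le_ciSup hbddS v
    have hsupS0 : 0 ≤ ⨆ v' : V, ∑ j, (t j * S (z j) (g j) v') ^ q₁ :=
      le_trans (Finset.sum_nonneg fun j _ =>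
        Real.rpow_nonneg (mul_nonneg (ht0 j) (hs0 j)) _) hstep2
    -- the sup over w bound
    have hstep4 : (⨆ w : W, ∑ j, (t j * R (z j) (g j) w) ^ p₁) ≤ B ^ (p₁ / p₂) := by
      apply ciSup_le
      intro w
      have hmul : ∀ j, (t j * R (z j) (g j) w) ^ p₁ = t j ^ p₁ * R (z j) (g j) w ^ p₁ :=
        fun j => Real.mul_rpow (ht0 j) (hRnn _ _ _)
      rcases eq_or_lt_of_le hp₁₂ with hpe | hplt
      · have : ∑ j, (t j * R (z j) (g j) w) ^ p₁ ≤ ∑ j, R (z j) (g j) w ^ p₁ := by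
          refine Finset.sum_le_sum fun j _ => ?_
          rw [hmul j]
          exact mul_le_of_le_one_left (Real.rpow_nonneg (hRnn _ _ _) _)
            (Real.rpow_le_one (ht0 j) (ht1 j) hp₁0.le)
        rw [hpe] at this ⊢
        rw [div_self hp₂0.ne', Real.rpow_one]
        exact this.trans (hBmem w)
      · -- Hölder with exponents p₂/(p₂-p₁) and p₂/p₁
        have hconj : Real.HolderConjugate (p₂ / (p₂ - p₁)) (p₂ / p₁) := by
          rw [Real.holderConjugate_iff]; constructor
          · rw [one_lt_div (by linarith)]; linarith
          · rw [inv_div, inv_div, ← add_div, sub_add_cancel, div_self hp₂0.ne']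
        have hhold := Real.inner_le_Lp_mul_Lq_of_nonneg Finset.univ hconj
          (f := fun j => t j ^ p₁) (g := fun j => R (z j) (g j) w ^ p₁)
          (fun j _ => Real.rpow_nonneg (ht0 j) _)
          (fun j _ => Real.rpow_nonneg (hRnn _ _ _) _)
        have hR2 : ∀ j, (R (z j) (g j) w ^ p₁) ^ (p₂ / p₁) = R (z j) (g j) w ^ p₂ := by
          intro j
          rw [← Real.rpow_mul (hRnn _ _ _)]
          congr 1; field_simp
        have hts : ∀ j, (t j ^ p₁) ^ (p₂ / (p₂ - p₁)) = t j ^ (p₁ * (p₂ / (p₂ - p₁))) :=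
          fun j => (Real.rpow_mul (ht0 j) _ _).symm
        -- ∑ t^(p₁·p₂/(p₂-p₁)) ≤ 1
        have hd2 : (0:ℝ) < p₂ - p₁ := by linarith
        have hd2' : p₂ - p₁ ≠ 0 := hd2.ne'
        have hspos : (0:ℝ) < p₁ * (p₂ / (p₂ - p₁)) :=
          mul_pos hp₁0 (div_pos hp₂0 hd2)
        have hexp : 1 / ρ ≤ p₁ * (p₂ / (p₂ - p₁)) := by
          rw [div_le_iff₀ hρ]
          have hprod : (p₁ * (p₂ / (p₂ - p₁))) * (1 / p₁ - 1 / p₂) = 1 := by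
            field_simp
          have hge : (1:ℝ) / p₁ - 1 / p₂ ≤ ρ := by rw [hρdef]; linarith
          nlinarith [mul_le_mul_of_nonneg_left hge hspos.le]
        have htsum : ∑ j, t j ^ (p₁ * (p₂ / (p₂ - p₁))) ≤ 1 := by
          rw [← hsum1]
          refine Finset.sum_le_sum fun j _ => ?_
          rcases eq_or_lt_of_le (ht0 j) with htz | htp
          · rw [← htz, Real.zero_rpow hspos.ne',
              Real.zero_rpow (one_div_ne_zero hρ.ne')]
          · exact Real.rpow_le_rpow_of_exponent_ge htp (ht1 j) hexp
        calc ∑ j, (t j * R (z j) (g j) w) ^ p₁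
            = ∑ j, t j ^ p₁ * R (z j) (g j) w ^ p₁ := by simp only [hmul]
          _ ≤ (∑ j, (t j ^ p₁) ^ (p₂ / (p₂ - p₁))) ^ (1 / (p₂ / (p₂ - p₁))) *
              (∑ j, (R (z j) (g j) w ^ p₁) ^ (p₂ / p₁)) ^ (1 / (p₂ / p₁)) := hhold
          _ ≤ 1 * (∑ j, R (z j) (g j) w ^ p₂) ^ (p₁ / p₂) := by
              simp only [hR2, one_div_div]
              refine mul_le_mul_of_nonneg_right ?_
                (Real.rpow_nonneg (Finset.sum_nonneg fun j _ =>
                  Real.rpow_nonneg (hRnn _ _ _) _) _)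
              refine Real.rpow_le_one ?_ ?_ (div_nonneg hd2.le hp₂0.le)
              · exact Finset.sum_nonneg fun j _ => Real.rpow_nonneg
                  (Real.rpow_nonneg (ht0 j) _) _
              · simp only [hts]; exact htsum
          _ ≤ B ^ (p₁ / p₂) := by
              rw [one_mul]
              exact Real.rpow_le_rpow (Finset.sum_nonneg fun j _ =>
                Real.rpow_nonneg (hRnn _ _ _) _) (hBmem w) (by positivity)
    -- assemble
    calc σ ^ (1 / q₂)
        = (∑ j, (t j * s j) ^ q₁) ^ (1 / q₁) := hstep1
      _ ≤ (⨆ v' : V, ∑ j, (t j * S (z j) (g j) v') ^ q₁) ^ (1 / q₁) :=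
          Real.rpow_le_rpow (Finset.sum_nonneg fun j _ =>
            Real.rpow_nonneg (mul_nonneg (ht0 j) (hs0 j)) _) hstep2 (by positivity)
      _ ≤ C * (⨆ w : W, ∑ j, (t j * R (z j) (g j) w) ^ p₁) ^ (1 / p₁) := happ
      _ ≤ C * (B ^ (p₁ / p₂)) ^ (1 / p₁) := by
          refine mul_le_mul_of_nonneg_left ?_ hC.le
          have hsupR0 : 0 ≤ ⨆ w : W, ∑ j, (t j * R (z j) (g j) w) ^ p₁ := by
            have hbddR : BddAbove
                (Set.range fun w : W => ∑ j, (t j * R (z j) (g j) w) ^ p₁) := by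
              have := hRbdd p₁ (Or.inl rfl) m z' g
              simp only [hR'] at this
              exact this
            refine le_trans ?_ (le_ciSup hbddR (Classical.arbitrary W))
            exact Finset.sum_nonneg fun j _ =>
              Real.rpow_nonneg (mul_nonneg (ht0 j) (hRnn _ _ _)) _
          exact Real.rpow_le_rpow hsupR0 hstep4 (by positivity)
      _ = C * B ^ (1 / p₂) := by
          rw [← Real.rpow_mul hB0]
          congr 1
          rw [div_mul_eq_mul_div, mul_one_div, div_div, div_mul_eq_div_div,
            div_self hp₁0.ne']
  -- finish
  have hsupS0 : 0 ≤ ⨆ v : V, ∑ j, S (z j) (g j) v ^ q₂ := by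
    refine le_trans ?_ (le_ciSup (hSbdd q₂ (Or.inr rfl) m z g) (Classical.arbitrary V))
    exact Finset.sum_nonneg fun j _ => Real.rpow_nonneg (hSnn _ _ _) _
  have hsup : (⨆ v : V, ∑ j, S (z j) (g j) v ^ q₂) ≤ (C * B ^ (1 / p₂)) ^ q₂ :=
    ciSup_le key
  calc (⨆ v : V, ∑ j, S (z j) (g j) v ^ q₂) ^ (1 / q₂)
      ≤ ((C * B ^ (1 / p₂)) ^ q₂) ^ (1 / q₂) :=
        Real.rpow_le_rpow hsupS0 hsup (by positivity)
    _ = C * B ^ (1 / p₂) := by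
        rw [← Real.rpow_mul hRHS0, mul_one_div_cancel hq₂0.ne', Real.rpow_one]
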